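/- Every chain in an Esakia space has an infimum and a supremum with respect to the partial order, and these infima and suprema of chains are preserved by Esakia morphisms. -/
import Mathlib


/- STATEMENT 5: Every (nonempty) chain in an Esakia space has an infimum and a supremum,
and infima and suprema of chains are preserved by Esakia morphisms. -/

/-- An Esakia space: a Stone space equipped with a partial order such that principal
upsets are closed and the down-closure of a clopen set is clopen. -/
structure EsaSpace where
  carrier : Type
  [topSp : TopologicalSpace carrier]
  [ord : PartialOrder carrier]
  compact : CompactSpace carrier
  t2 : T2Space carrier
  zeroDim : ∀ U : Set carrier, IsOpen U →
    ∃ S : Set (Set carrier), (∀ V ∈ S, IsClopen V) ∧ U = ⋃₀ S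
  ici_closed : ∀ x : carrier, IsClosed (Set.Ici x)
  down_clopen : ∀ U : Set carrier, IsClopen U →
    IsClopen (↑(lowerClosure U) : Set carrier)

attribute [instance] EsaSpace.topSp EsaSpace.ord

/-- An Esakia morphism: continuous, order preserving, satisfying the back condition. -/
structure EsaHom (X Y : EsaSpace) where
  toFun : X.carrier → Y.carrier
  continuous : Continuous toFun
  monotone : Monotone toFun
  up : ∀ (x : X.carrier) (y : Y.carrier), toFun x ≤ y → ∃ z, x ≤ z ∧ toFun z = y

/-- In an Esakia space, principal downsets are closed. -/
lemma EsaSpace.iic_closed (X : EsaSpace) (x : X.carrier) : IsClosed (Set.Iic x) := by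
  rw [← isOpen_compl_iff, isOpen_iff_forall_mem_open]
  intro y hy
  have hy' : ¬ y ≤ x := hy
  have hx : x ∈ (Set.Ici y)ᶜ := fun h => hy' h
  obtain ⟨S, hS, hU⟩ := X.zeroDim _ (X.ici_closed y).isOpen_compl
  rw [hU] at hx
  obtain ⟨V, hVS, hxV⟩ := hx
  have hVcl := hS V hVS
  have hVsub : V ⊆ (Set.Ici y)ᶜ := hU ▸ Set.subset_sUnion_of_mem hVS
  refine ⟨(↑(lowerClosure V))ᶜ, ?_, (X.down_clopen V hVcl).compl.isOpen, ?_⟩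
  · intro z hz hzx
    have : z ∈ (lowerClosure V : Set X.carrier) := ⟨x, hxV, hzx⟩
    exact hz this
  · intro hyV
    obtain ⟨v, hvV, hyv⟩ := hyV
    exact hVsub hvV hyv

lemma EsaSpace.exists_lub_mem_closure (X : EsaSpace) (C : Set X.carrier)
    (hne : C.Nonempty) (hchain : IsChain (· ≤ ·) C) :
    ∃ b ∈ closure C, IsLUB C b := by
  haveI := X.compact
  haveI : Nonempty C := hne.to_subtype
  set t : C → Set X.carrier := fun c => closure C ∩ Set.Ici (c : X.carrier) with ht
  have hdir : Directed (· ⊇ ·) t := by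
    intro c d
    rcases eq_or_ne (c : X.carrier) d with h | h
    · exact ⟨d, by rw [ht]; simp [h], subset_rfl⟩
    rcases hchain c.2 d.2 h with h | h
    · exact ⟨d, Set.inter_subset_inter_right _ (Set.Ici_subset_Ici.2 h), subset_rfl⟩
    · exact ⟨c, subset_rfl, Set.inter_subset_inter_right _ (Set.Ici_subset_Ici.2 h)⟩
  have hclosed : ∀ c, IsClosed (t c) := fun c => isClosed_closure.inter (X.ici_closed c)
  have hne' : ∀ c : C, (t c).Nonempty := fun c => ⟨c, subset_closure c.2, le_refl _⟩
  obtain ⟨b, hb⟩ := IsCompact.nonempty_iInter_of_directed_nonempty_isCompact_isClosed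
    t hdir hne' (fun c => (hclosed c).isCompact) hclosed
  simp only [Set.mem_iInter] at hb
  obtain ⟨c0, hc0⟩ := hne
  refine ⟨b, (hb ⟨c0, hc0⟩).1, ?_, ?_⟩
  · intro c hc
    exact (hb ⟨c, hc⟩).2
  · intro u hu
    have hsub : closure C ⊆ Set.Iic u :=
      closure_minimal (fun c hc => hu hc) (X.iic_closed u)
    exact hsub (hb ⟨c0, hc0⟩).1

lemma EsaSpace.exists_glb_mem_closure (X : EsaSpace) (C : Set X.carrier)
    (hne : C.Nonempty) (hchain : IsChain (· ≤ ·) C) :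
    ∃ a ∈ closure C, IsGLB C a := by
  haveI := X.compact
  haveI : Nonempty C := hne.to_subtype
  set t : C → Set X.carrier := fun c => closure C ∩ Set.Iic (c : X.carrier) with ht
  have hdir : Directed (· ⊇ ·) t := by
    intro c d
    rcases eq_or_ne (c : X.carrier) d with h | h
    · exact ⟨d, by rw [ht]; simp [h], subset_rfl⟩
    rcases hchain c.2 d.2 h with h | h
    · exact ⟨c, subset_rfl, Set.inter_subset_inter_right _ (Set.Iic_subset_Iic.2 h)⟩
    · exact ⟨d, Set.inter_subset_inter_right _ (Set.Iic_subset_Iic.2 h), subset_rfl⟩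
  have hclosed : ∀ c, IsClosed (t c) := fun c => isClosed_closure.inter (X.iic_closed c)
  have hne' : ∀ c : C, (t c).Nonempty := fun c => ⟨c, subset_closure c.2, le_refl _⟩
  obtain ⟨a, ha⟩ := IsCompact.nonempty_iInter_of_directed_nonempty_isCompact_isClosed
    t hdir hne' (fun c => (hclosed c).isCompact) hclosed
  simp only [Set.mem_iInter] at ha
  obtain ⟨c0, hc0⟩ := hne
  refine ⟨a, (ha ⟨c0, hc0⟩).1, ?_, ?_⟩
  · intro c hc
    exact (ha ⟨c, hc⟩).2
  · intro l hl
    have hsub : closure C ⊆ Set.Ici l :=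
      closure_minimal (fun c hc => hl hc) (X.ici_closed l)
    exact hsub (ha ⟨c0, hc0⟩).1

theorem chains_have_inf_sup_preserved (X : EsaSpace) (C : Set X.carrier)
    (hne : C.Nonempty) (hchain : IsChain (· ≤ ·) C) :
    ((∃ a, IsGLB C a) ∧ (∃ b, IsLUB C b)) ∧
    (∀ (Y : EsaSpace) (f : EsaHom X Y),
      (∀ a, IsGLB C a → IsGLB (f.toFun '' C) (f.toFun a)) ∧
      (∀ b, IsLUB C b → IsLUB (f.toFun '' C) (f.toFun b))) := by
  obtain ⟨a0, ha0mem, ha0⟩ := X.exists_glb_mem_closure C hne hchain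
  obtain ⟨b0, hb0mem, hb0⟩ := X.exists_lub_mem_closure C hne hchain
  refine ⟨⟨⟨a0, ha0⟩, ⟨b0, hb0⟩⟩, fun Y f => ⟨?_, ?_⟩⟩
  · intro a ha
    have haeq : a = a0 := ha.unique ha0
    subst haeq
    have hfa : f.toFun a ∈ closure (f.toFun '' C) :=
      (image_closure_subset_closure_image f.continuous) ⟨a, ha0mem, rfl⟩
    constructor
    · rintro y ⟨c, hc, rfl⟩
      exact f.monotone (ha.1 hc)
    · intro l hl
      have hsub : closure (f.toFun '' C) ⊆ Set.Ici l :=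
        closure_minimal (fun y hy => hl hy) (Y.ici_closed l)
      exact hsub hfa
  · intro b hb
    have hbeq : b = b0 := hb.unique hb0
    subst hbeq
    have hfb : f.toFun b ∈ closure (f.toFun '' C) :=
      (image_closure_subset_closure_image f.continuous) ⟨b, hb0mem, rfl⟩
    constructor
    · rintro y ⟨c, hc, rfl⟩
      exact f.monotone (hb.1 hc)
    · intro u hu
      have hsub : closure (f.toFun '' C) ⊆ Set.Iic u :=
        closure_minimal (fun y hy => hu hy) (Y.iic_closed u)
      exact hsub hfb
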